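/- Let W be a Hausdorff locally convex real topological vector space. Let 𝔄 and 𝔅 be nonempty families of nonempty compact convex subsets of W, each downward directed by inclusion (for any A₁, A₂ ∈ 𝔄 there is A₃ ∈ 𝔄 with A₃ ⊆ A₁ ∩ A₂, and similarly for 𝔅). If a set Z ⊆ W satisfies Z ⊆ A + B (Minkowski sum) for every A ∈ 𝔄 and every B ∈ 𝔅, then Z ⊆ (⋂ 𝔄) + (⋂ 𝔅). -/

import Mathlib

open scoped Pointwise

/-- Order regularity of the space of nonempty compact convex subsets of a
Hausdorff locally convex real TVS: if `Z ⊆ A + B` for all members `A`, `B` of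
two downward directed families of nonempty compact convex sets, then
`Z ⊆ ⋂ 𝔄 + ⋂ 𝔅`. -/
theorem stmt8 {W : Type*} [AddCommGroup W] [Module ℝ W] [TopologicalSpace W]
    [IsTopologicalAddGroup W] [ContinuousSMul ℝ W] [T2Space W]
    [LocallyConvexSpace ℝ W]
    (𝔄 𝔅 : Set (Set W)) (h𝔄ne : 𝔄.Nonempty) (h𝔅ne : 𝔅.Nonempty)
    (h𝔄 : ∀ A ∈ 𝔄, A.Nonempty ∧ IsCompact A ∧ Convex ℝ A)
    (h𝔅 : ∀ B ∈ 𝔅, B.Nonempty ∧ IsCompact B ∧ Convex ℝ B)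
    (hdir𝔄 : ∀ A₁ ∈ 𝔄, ∀ A₂ ∈ 𝔄, ∃ A₃ ∈ 𝔄, A₃ ⊆ A₁ ∩ A₂)
    (hdir𝔅 : ∀ B₁ ∈ 𝔅, ∀ B₂ ∈ 𝔅, ∃ B₃ ∈ 𝔅, B₃ ⊆ B₁ ∩ B₂)
    (Z : Set W) (hZ : ∀ A ∈ 𝔄, ∀ B ∈ 𝔅, Z ⊆ A + B) :
    Z ⊆ ⋂₀ 𝔄 + ⋂₀ 𝔅 := by
  intro z hz
  obtain ⟨A₀, hA₀⟩ := h𝔄ne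
  obtain ⟨B₀, hB₀⟩ := h𝔅ne
  set ι := {p : Set W × Set W // p.1 ∈ 𝔄 ∧ p.2 ∈ 𝔅} with hι
  haveI : Nonempty ι := ⟨⟨(A₀, B₀), hA₀, hB₀⟩⟩
  set K : ι → Set W := fun p => p.1.1 ∩ ({z} - p.1.2) with hK
  have hKne : ∀ i : ι, (K i).Nonempty := by
    rintro ⟨⟨A, B⟩, hA, hB⟩
    obtain ⟨a, ha, b, hb, hab⟩ := hZ A hA B hB hz
    exact ⟨a, ha, z, rfl, b, hb, sub_eq_of_eq_add hab.symm⟩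
  have hKcsub : ∀ i : ι, IsCompact ({z} - i.1.2) := fun i => by
    rw [Set.singleton_sub]
    exact ((h𝔅 _ i.2.2).2.1).image (continuous_const.sub continuous_id)
  have hKc : ∀ i : ι, IsCompact (K i) := fun i =>
    ((h𝔄 _ i.2.1).2.1).inter_right (hKcsub i).isClosed
  have hKcl : ∀ i : ι, IsClosed (K i) := fun i => (hKc i).isClosed
  have hdir : Directed (· ⊇ ·) K := by
    rintro ⟨⟨A₁, B₁⟩, hA₁, hB₁⟩ ⟨⟨A₂, B₂⟩, hA₂, hB₂⟩
    obtain ⟨A₃, hA₃, hA₃sub⟩ := hdir𝔄 A₁ hA₁ A₂ hA₂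
    obtain ⟨B₃, hB₃, hB₃sub⟩ := hdir𝔅 B₁ hB₁ B₂ hB₂
    refine ⟨⟨(A₃, B₃), hA₃, hB₃⟩, ?_, ?_⟩ <;>
      · rintro x ⟨hx1, y, hy, b, hb, hyb⟩
        refine ⟨?_, y, hy, b, ?_, hyb⟩
        · first
            | exact (hA₃sub hx1).1
            | exact (hA₃sub hx1).2
        · first
            | exact (hB₃sub hb).1
            | exact (hB₃sub hb).2
  obtain ⟨a, ha⟩ := IsCompact.nonempty_iInter_of_directed_nonempty_isCompact_isClosed
    K hdir hKne hKc hKcl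
  simp only [Set.mem_iInter] at ha
  refine ⟨a, ?_, z - a, ?_, by show a + (z - a) = z; rw [add_comm, sub_add_cancel]⟩
  · intro A hA
    exact (ha ⟨(A, B₀), hA, hB₀⟩).1
  · intro B hB
    obtain ⟨-, y, hy, b, hb, hyb⟩ := ha ⟨(A₀, B), hA₀, hB⟩
    rw [Set.mem_singleton_iff] at hy
    have : z - a = b := by rw [← hyb, hy, sub_sub_cancel]
    rw [this]; exact hb
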